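/- Define the differential operator D₂ acting on smooth functions f : ℝ → ℝ by D₂ f := S(S(−f'' − 6 sech²·f + f)), where S u := u' + tanh·u, i.e. D₂ = (d/dx + tanh(x))∘(d/dx + tanh(x))∘(−d²/dx² − 6 sech²(x) + 1). Then for all x ∈ ℝ, D₂( sech − 2 sech³ )(x) = 48 sech³(x) − 264 sech⁵(x) + 240 sech⁷(x). -/

import Mathlib

open Real

noncomputable def sech (x : ℝ) : ℝ := (Real.cosh x)⁻¹

/-- The operator `S = d/dx + tanh(x)`. -/
noncomputable def Sop (f : ℝ → ℝ) : ℝ → ℝ := fun x => deriv f x + Real.tanh x * f x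

/-- The operator `L₊ = −d²/dx² − 6 sech²(x) + 1`. -/
noncomputable def Lplus (f : ℝ → ℝ) : ℝ → ℝ :=
  fun x => -deriv (deriv f) x - 6 * sech x ^ 2 * f x + f x

/-- The operator `D₂ = S ∘ S ∘ L₊`. -/
noncomputable def D2 (f : ℝ → ℝ) : ℝ → ℝ := Sop (Sop (Lplus f))

private lemma hinv (x : ℝ) :
    HasDerivAt (fun y => (Real.cosh y)⁻¹) (-Real.sinh x / Real.cosh x ^ 2) x :=
  (Real.hasDerivAt_cosh x).inv (Real.cosh_pos x).ne'

private lemma deriv_f :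
    deriv (fun y : ℝ => sech y - 2 * sech y ^ 3)
      = fun x => Real.sinh x * (6 * (Real.cosh x)⁻¹ ^ 4 - (Real.cosh x)⁻¹ ^ 2) := by
  funext x
  have hc := (Real.cosh_pos x).ne'
  have h := (hinv x).fun_sub (((hinv x).fun_pow 3).const_mul 2)
  have h' : HasDerivAt (fun y : ℝ => sech y - 2 * sech y ^ 3)
      (Real.sinh x * (6 * (Real.cosh x)⁻¹ ^ 4 - (Real.cosh x)⁻¹ ^ 2)) x := by
    simp only [sech]
    refine h.congr_deriv ?_
    simp only [inv_pow, Nat.cast_ofNat]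
    field_simp
    ring
  exact h'.deriv

private lemma deriv_f1 (x : ℝ) :
    deriv (fun y => Real.sinh y * (6 * (Real.cosh y)⁻¹ ^ 4 - (Real.cosh y)⁻¹ ^ 2)) x
      = 6 * (Real.cosh x)⁻¹ ^ 3 - (Real.cosh x)⁻¹
        + Real.sinh x ^ 2 * (2 * (Real.cosh x)⁻¹ ^ 3 - 24 * (Real.cosh x)⁻¹ ^ 5) := by
  have hc := (Real.cosh_pos x).ne'
  have h := (Real.hasDerivAt_sinh x).fun_mul
    ((((hinv x).fun_pow 4).const_mul 6).fun_sub ((hinv x).fun_pow 2))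
  have h' : HasDerivAt (fun y => Real.sinh y * (6 * (Real.cosh y)⁻¹ ^ 4 - (Real.cosh y)⁻¹ ^ 2))
      (6 * (Real.cosh x)⁻¹ ^ 3 - (Real.cosh x)⁻¹
        + Real.sinh x ^ 2 * (2 * (Real.cosh x)⁻¹ ^ 3 - 24 * (Real.cosh x)⁻¹ ^ 5)) x := by
    refine h.congr_deriv ?_
    simp only [inv_pow, Nat.cast_ofNat]
    field_simp
    ring
  exact h'.deriv

private lemma Lplus_f :
    Lplus (fun y : ℝ => sech y - 2 * sech y ^ 3)
      = fun x => 12 * (Real.cosh x)⁻¹ ^ 3 - 12 * (Real.cosh x)⁻¹ ^ 5 := by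
  funext x
  have hc := (Real.cosh_pos x).ne'
  have hs : Real.sinh x ^ 2 = Real.cosh x ^ 2 - 1 := by
    have := Real.cosh_sq x
    linarith
  simp only [Lplus, deriv_f]
  rw [deriv_f1]
  simp only [sech, inv_pow]
  rw [hs]
  field_simp
  ring

private lemma Sop_G :
    Sop (fun x => 12 * (Real.cosh x)⁻¹ ^ 3 - 12 * (Real.cosh x)⁻¹ ^ 5)
      = fun x => Real.sinh x * (48 * (Real.cosh x)⁻¹ ^ 6 - 24 * (Real.cosh x)⁻¹ ^ 4) := by
  funext x
  have hc := (Real.cosh_pos x).ne'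
  have h := (((hinv x).fun_pow 3).const_mul 12).fun_sub (((hinv x).fun_pow 5).const_mul 12)
  simp only [Sop, h.deriv, Real.tanh_eq_sinh_div_cosh]
  simp only [inv_pow, Nat.cast_ofNat]
  field_simp
  ring

private lemma deriv_H (x : ℝ) :
    deriv (fun y => Real.sinh y * (48 * (Real.cosh y)⁻¹ ^ 6 - 24 * (Real.cosh y)⁻¹ ^ 4)) x
      = 48 * (Real.cosh x)⁻¹ ^ 5 - 24 * (Real.cosh x)⁻¹ ^ 3
        + Real.sinh x ^ 2 * (96 * (Real.cosh x)⁻¹ ^ 5 - 288 * (Real.cosh x)⁻¹ ^ 7) := by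
  have hc := (Real.cosh_pos x).ne'
  have h := (Real.hasDerivAt_sinh x).fun_mul
    ((((hinv x).fun_pow 6).const_mul 48).fun_sub (((hinv x).fun_pow 4).const_mul 24))
  have h' : HasDerivAt (fun y => Real.sinh y * (48 * (Real.cosh y)⁻¹ ^ 6 - 24 * (Real.cosh y)⁻¹ ^ 4))
      (48 * (Real.cosh x)⁻¹ ^ 5 - 24 * (Real.cosh x)⁻¹ ^ 3
        + Real.sinh x ^ 2 * (96 * (Real.cosh x)⁻¹ ^ 5 - 288 * (Real.cosh x)⁻¹ ^ 7)) x := by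
    refine h.congr_deriv ?_
    simp only [inv_pow, Nat.cast_ofNat]
    field_simp
    ring
  exact h'.deriv

/-- Identity (1.48) in the proof of Lemma 1.6:
`D₂(sech − 2 sech³) = 48 sech³ − 264 sech⁵ + 240 sech⁷`. -/
theorem D2_identity :
    ∀ x : ℝ,
      D2 (fun y => sech y - 2 * sech y ^ 3) x
        = 48 * sech x ^ 3 - 264 * sech x ^ 5 + 240 * sech x ^ 7 := by
  intro x
  have hc := (Real.cosh_pos x).ne'
  have hs : Real.sinh x ^ 2 = Real.cosh x ^ 2 - 1 := by
    have := Real.cosh_sq x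
    linarith
  rw [D2, Lplus_f, Sop_G]
  simp only [Sop]
  rw [deriv_H]
  simp only [Real.tanh_eq_sinh_div_cosh, sech, inv_pow]
  ring_nf
  rw [hs]
  field_simp
  ring
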